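/- arXiv:1406.3152 — 3 statements merged into one kernel-verified Lean document; each statement's English description precedes it below -/
import Mathlib

section
/- Let A be an abelian ℓ-group and let g, f ∈ A be such that every minimal prime ideal p of A satisfies: g ∈ p if and only if f ∉ p. Then g^⊥⊥ = f^⊥, and consequently the principal polar f^⊥⊥ is the complement of g^⊥⊥ in the lattice of principal polars of A. -/
/-- The absolute value `|g| = (g ⊔ 0) + ((-g) ⊔ 0)` in a lattice-ordered abelian group. -/
def absl {A : Type*} [Lattice A] [AddCommGroup A] (g : A) : A :=
  (g ⊔ 0) + (-g ⊔ 0)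

/-- The polar `T^⊥ = {x : |x| ⊓ |t| = 0 for all t ∈ T}`. -/
def polar {A : Type*} [Lattice A] [AddCommGroup A] (T : Set A) : Set A :=
  {x : A | ∀ t ∈ T, absl x ⊓ absl t = 0}

/-- An ideal of an abelian ℓ-group: an order-convex sublattice subgroup. -/
structure IsIdeal {A : Type*} [Lattice A] [AddCommGroup A] (I : Set A) : Prop where
  zero_mem : (0 : A) ∈ I
  add_mem : ∀ ⦃a b : A⦄, a ∈ I → b ∈ I → a + b ∈ I
  neg_mem : ∀ ⦃a : A⦄, a ∈ I → -a ∈ I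
  sup_mem : ∀ ⦃a b : A⦄, a ∈ I → b ∈ I → a ⊔ b ∈ I
  inf_mem : ∀ ⦃a b : A⦄, a ∈ I → b ∈ I → a ⊓ b ∈ I
  convex : ∀ ⦃a b c : A⦄, a ∈ I → c ∈ I → a ≤ b → b ≤ c → b ∈ I

/-- A prime ideal: a proper ideal such that `a ⊓ b = 0` implies `a ∈ p` or `b ∈ p`. -/
def IsPrimeIdeal {A : Type*} [Lattice A] [AddCommGroup A] (p : Set A) : Prop :=
  IsIdeal p ∧ p ≠ Set.univ ∧ ∀ a b : A, a ⊓ b = 0 → a ∈ p ∨ b ∈ p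

/-- A minimal prime ideal: a prime ideal containing no strictly smaller prime ideal. -/
def IsMinimalPrimeLIdeal {A : Type*} [Lattice A] [AddCommGroup A] (p : Set A) : Prop :=
  IsPrimeIdeal p ∧ ∀ q : Set A, IsPrimeIdeal q → q ⊆ p → q = p

section Aux

variable {A : Type*} [Lattice A] [AddCommGroup A] [CovariantClass A A (· + ·) (· ≤ ·)]

lemma neg_abs_le' (x : A) : -|x| ≤ x := neg_le.mp (neg_le_abs x)

lemma absl_eq_abs (x : A) : absl x = |x| := by
  rw [← posPart_add_negPart x, posPart_def, negPart_def, absl]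

lemma abs_eq_zero' {x : A} (h : |x| = 0) : x = 0 := by
  have h1 : x ≤ 0 := h ▸ le_abs_self x
  have h2 : -x ≤ 0 := h ▸ neg_le_abs x
  exact le_antisymm h1 (by simpa using h2)

/-- For nonneg `a b c`: `(a+b) ⊓ c ≤ a⊓c + b⊓c`. -/
lemma inf_add_le {a b c : A} (ha : 0 ≤ a) (hb : 0 ≤ b) (hc : 0 ≤ c) :
    (a + b) ⊓ c ≤ (a ⊓ c) + (b ⊓ c) := by
  have key : (a ⊓ c) + (b ⊓ c) = ((a + b) ⊓ (a + c)) ⊓ ((c + b) ⊓ (c + c)) := by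
    rw [inf_add a c (b ⊓ c), add_inf b c a, add_inf b c c]
  rw [key]
  refine le_inf (le_inf inf_le_left ?_) (le_inf ?_ ?_)
  · exact le_trans inf_le_right (le_add_of_nonneg_left ha)
  · exact le_trans inf_le_right (le_add_of_nonneg_right hb)
  · exact le_trans inf_le_right (le_add_of_nonneg_right hc)

/-- membership of an ideal is determined by absolute value -/
lemma IsIdeal.abs_mem_iff {I : Set A} (hI : IsIdeal I) (x : A) : |x| ∈ I ↔ x ∈ I := by
  constructor
  · intro hx
    exact hI.convex (hI.neg_mem hx) hx (neg_abs_le' x) (le_abs_self x)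
  · intro hx
    have h1 : x ⊔ 0 ∈ I := hI.sup_mem hx hI.zero_mem
    have h2 : -x ⊔ 0 ∈ I := hI.sup_mem (hI.neg_mem hx) hI.zero_mem
    have := hI.add_mem h1 h2
    rwa [show (x ⊔ 0) + (-x ⊔ 0) = |x| from absl_eq_abs x] at this

lemma prime_abs {p : Set A} (hp : IsPrimeIdeal p) {a b : A} (hab : |a| ⊓ |b| = 0) :
    a ∈ p ∨ b ∈ p := by
  rcases hp.2.2 _ _ hab with h | h
  · exact Or.inl ((hp.1.abs_mem_iff a).1 h)
  · exact Or.inr ((hp.1.abs_mem_iff b).1 h)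

lemma mem_of_abs_le {I : Set A} (hI : IsIdeal I) {x y : A} (hy : y ∈ I) (h : |x| ≤ |y|) :
    x ∈ I := by
  have hya : |y| ∈ I := (hI.abs_mem_iff y).2 hy
  exact (hI.abs_mem_iff x).1 (hI.convex hI.zero_mem hya (abs_nonneg x) h)

/-- A (proper) filter of the positive cone. -/
def IsFilt (D : Set A) : Prop :=
  D.Nonempty ∧ (0 : A) ∉ D ∧ (∀ d ∈ D, 0 ≤ d) ∧ (∀ a ∈ D, ∀ b ∈ D, a ⊓ b ∈ D) ∧
    (∀ a ∈ D, ∀ z : A, a ≤ z → z ∈ D)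

/-- the prime ideal associated to a maximal filter -/
def polD (D : Set A) : Set A := {x : A | ∃ u ∈ D, |x| ⊓ u = 0}

lemma polD_abs_inf_eq_zero {D : Set A} (hD : IsFilt D) {x u : A} (hu : u ∈ D)
    (h : |x| ⊓ u ≤ 0) : x ∈ polD D :=
  ⟨u, hu, le_antisymm h (le_inf (abs_nonneg x) (hD.2.2.1 u hu))⟩

lemma mem_polD_of_le {D : Set A} (hD : IsFilt D) {x a b : A} (ha : a ∈ polD D)
    (hb : b ∈ polD D) (h : |x| ≤ |a| + |b|) : x ∈ polD D := by
  obtain ⟨u, hu, hu0⟩ := ha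
  obtain ⟨v, hv, hv0⟩ := hb
  have huv : u ⊓ v ∈ D := hD.2.2.2.1 u hu v hv
  refine polD_abs_inf_eq_zero hD huv ?_
  calc |x| ⊓ (u ⊓ v) ≤ (|a| + |b|) ⊓ (u ⊓ v) :=
        inf_le_inf_right _ h
    _ ≤ |a| ⊓ (u ⊓ v) + |b| ⊓ (u ⊓ v) :=
        inf_add_le (abs_nonneg a) (abs_nonneg b)
          (le_inf (hD.2.2.1 u hu) (hD.2.2.1 v hv))
    _ ≤ |a| ⊓ u + |b| ⊓ v :=
        add_le_add (inf_le_inf_left _ inf_le_left) (inf_le_inf_left _ inf_le_right)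
    _ = 0 := by rw [hu0, hv0, add_zero]

lemma polD_ideal {D : Set A} (hD : IsFilt D) : IsIdeal (polD D) := by
  obtain ⟨d0, hd0⟩ := hD.1
  have zero_mem : (0 : A) ∈ polD D := by
    refine polD_abs_inf_eq_zero hD hd0 ?_
    simp [abs_of_nonneg (le_refl (0:A))]
  refine ⟨zero_mem, ?_, ?_, ?_, ?_, ?_⟩
  · intro a b ha hb
    exact mem_polD_of_le hD ha hb (abs_add_le a b)
  · intro a ha
    obtain ⟨u, hu, h0⟩ := ha
    exact ⟨u, hu, by rwa [abs_neg]⟩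
  · intro a b ha hb
    refine mem_polD_of_le hD ha hb (abs_le'.2 ⟨?_, ?_⟩)
    · exact sup_le ((le_abs_self a).trans (le_add_of_nonneg_right (abs_nonneg b)))
        ((le_abs_self b).trans (le_add_of_nonneg_left (abs_nonneg a)))
    · rw [neg_sup]
      exact inf_le_left.trans ((neg_le_abs a).trans (le_add_of_nonneg_right (abs_nonneg b)))
  · intro a b ha hb
    refine mem_polD_of_le hD ha hb (abs_le'.2 ⟨?_, ?_⟩)
    · exact inf_le_left.trans ((le_abs_self a).trans (le_add_of_nonneg_right (abs_nonneg b)))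
    · rw [neg_inf]
      exact sup_le ((neg_le_abs a).trans (le_add_of_nonneg_right (abs_nonneg b)))
        ((neg_le_abs b).trans (le_add_of_nonneg_left (abs_nonneg a)))
  · intro a b c ha hc hab hbc
    refine mem_polD_of_le hD ha hc (abs_le'.2 ⟨?_, ?_⟩)
    · exact hbc.trans ((le_abs_self c).trans (le_add_of_nonneg_left (abs_nonneg a)))
    · calc -b ≤ -a := neg_le_neg_iff.mpr hab
        _ ≤ |a| := neg_le_abs a
        _ ≤ |a| + |c| := le_add_of_nonneg_right (abs_nonneg c)

lemma polD_not_mem {D : Set A} (hD : IsFilt D) {u : A} (hu : u ∈ D) : u ∉ polD D := by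
  rintro ⟨v, hv, h0⟩
  have : |u| ⊓ v ∈ D := by
    rw [abs_of_nonneg (hD.2.2.1 u hu)]
    exact hD.2.2.2.1 u hu v hv
  rw [h0] at this
  exact hD.2.1 this

/-- every filter extends to a maximal filter -/
lemma exists_ultrafilt {D : Set A} (hD : IsFilt D) :
    ∃ U : Set A, IsFilt U ∧ D ⊆ U ∧ ∀ V : Set A, IsFilt V → U ⊆ V → V = U := by
  obtain ⟨U, hDU, hU⟩ := zorn_subset_nonempty {E : Set A | IsFilt E}
    (fun c hc hchain hne => by
      obtain ⟨E0, hE0⟩ := hne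
      refine ⟨⋃₀ c, ⟨?_, ?_, ?_, ?_, ?_⟩, fun E hE => Set.subset_sUnion_of_mem hE⟩
      · obtain ⟨d, hd⟩ := (hc hE0).1
        exact ⟨d, E0, hE0, hd⟩
      · rintro ⟨E, hE, h0⟩
        exact (hc hE).2.1 h0
      · rintro d ⟨E, hE, hd⟩
        exact (hc hE).2.2.1 d hd
      · rintro a ⟨E1, hE1, ha⟩ b ⟨E2, hE2, hb⟩
        rcases hchain.total hE1 hE2 with h | h
        · exact ⟨E2, hE2, (hc hE2).2.2.2.1 a (h ha) b hb⟩
        · exact ⟨E1, hE1, (hc hE1).2.2.2.1 a ha b (h hb)⟩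
      · rintro a ⟨E, hE, ha⟩ z hz
        exact ⟨E, hE, (hc hE).2.2.2.2 a ha z hz⟩)
    D hD
  exact ⟨U, hU.prop, hDU, fun V hV hUV => subset_antisymm (hU.2 hV hUV) hUV⟩

/-- the polar of a maximal filter is a prime ideal -/
lemma polD_prime {U : Set A} (hU : IsFilt U)
    (hmax : ∀ V : Set A, IsFilt V → U ⊆ V → V = U) : IsPrimeIdeal (polD U) := by
  obtain ⟨u0, hu0⟩ := hU.1
  refine ⟨polD_ideal hU, ?_, ?_⟩
  · intro h
    exact polD_not_mem hU hu0 (h ▸ Set.mem_univ u0)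
  · intro a b hab
    have ha0 : 0 ≤ a := hab ▸ inf_le_left
    have hb0 : 0 ≤ b := hab ▸ inf_le_right
    by_cases haP : a ∈ polD U
    · exact Or.inl haP
    · set V : Set A := {z : A | ∃ u ∈ U, a ⊓ u ≤ z} with hVdef
      have hV : IsFilt V := by
        refine ⟨⟨a, u0, hu0, inf_le_left⟩, ?_, ?_, ?_, ?_⟩
        · rintro ⟨u, hu, hle⟩
          refine haP (polD_abs_inf_eq_zero hU hu ?_)
          rwa [abs_of_nonneg ha0]
        · rintro d ⟨u, hu, hle⟩
          exact le_trans (le_inf ha0 (hU.2.2.1 u hu)) hle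
        · rintro z1 ⟨u1, hu1, h1⟩ z2 ⟨u2, hu2, h2⟩
          refine ⟨u1 ⊓ u2, hU.2.2.2.1 u1 hu1 u2 hu2, le_inf ?_ ?_⟩
          · exact le_trans (inf_le_inf_left a inf_le_left) h1
          · exact le_trans (inf_le_inf_left a inf_le_right) h2
        · rintro z ⟨u, hu, hle⟩ w hzw
          exact ⟨u, hu, hle.trans hzw⟩
      have hUV : U ⊆ V := fun u hu => ⟨u, hu, inf_le_right⟩
      have hVU : V = U := hmax V hV hUV
      have haU : a ∈ U := hVU ▸ ⟨u0, hu0, inf_le_left⟩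
      right
      exact ⟨a, haU, by rw [abs_of_nonneg hb0, inf_comm]; exact hab⟩

/-- if the maximal filter contains the positive complement of a prime `p`, then
`polD U ⊆ p` -/
lemma polD_subset {U : Set A} (hU : IsFilt U) {p : Set A} (hp : IsPrimeIdeal p)
    (hsub : ∀ d : A, 0 ≤ d → d ∉ p → d ∈ U) : polD U ⊆ p := by
  rintro x ⟨u, hu, h0⟩
  by_contra hx
  have habs : |x| ∉ p := fun hc => hx ((hp.1.abs_mem_iff x).1 hc)
  have hxU : |x| ∈ U := hsub _ (abs_nonneg x) habs
  have : |x| ⊓ u ∈ U := hU.2.2.2.1 _ hxU u hu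
  rw [h0] at this
  exact hU.2.1 this

/-- every prime ideal contains a minimal prime ideal -/
lemma exists_minimalPrime_subset {P : Set A} (hP : IsPrimeIdeal P) :
    ∃ p : Set A, IsMinimalPrimeLIdeal p ∧ p ⊆ P := by
  obtain ⟨m, hmP, hm⟩ := zorn_superset_nonempty {q : Set A | IsPrimeIdeal q}
    (fun c hc hchain hne => by
      obtain ⟨q0, hq0⟩ := hne
      refine ⟨⋂₀ c, ⟨⟨?_, ?_, ?_, ?_, ?_, ?_⟩, ?_, ?_⟩, fun q hq => Set.sInter_subset_of_mem hq⟩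
      · exact fun q hq => (hc hq).1.zero_mem
      · exact fun a b ha hb q hq => (hc hq).1.add_mem (ha q hq) (hb q hq)
      · exact fun a ha q hq => (hc hq).1.neg_mem (ha q hq)
      · exact fun a b ha hb q hq => (hc hq).1.sup_mem (ha q hq) (hb q hq)
      · exact fun a b ha hb q hq => (hc hq).1.inf_mem (ha q hq) (hb q hq)
      · exact fun a b c ha hcc h1 h2 q hq => (hc hq).1.convex (ha q hq) (hcc q hq) h1 h2
      · intro hcontra
        refine (hc hq0).2.1 (Set.eq_univ_of_univ_subset ?_)
        exact hcontra ▸ Set.sInter_subset_of_mem hq0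
      · intro a b hab
        by_contra hcon
        push_neg at hcon
        obtain ⟨ha, hb⟩ := hcon
        simp only [Set.mem_sInter, not_forall] at ha hb
        obtain ⟨q1, hq1, ha1⟩ := ha
        obtain ⟨q2, hq2, hb2⟩ := hb
        rcases hchain.total hq1 hq2 with hle | hle
        · rcases (hc hq1).2.2 a b hab with h | h
          · exact ha1 h
          · exact hb2 (hle h)
        · rcases (hc hq2).2.2 a b hab with h | h
          · exact ha1 (hle h)
          · exact hb2 h)
    P hP
  refine ⟨m, ⟨hm.prop, fun q hq hqm => subset_antisymm hqm (hm.2 hq hqm)⟩, hmP⟩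

/-- L1: every nonzero element avoids some minimal prime ideal -/
lemma exists_minimalPrime_not_mem {c : A} (hc : c ≠ 0) :
    ∃ p : Set A, IsMinimalPrimeLIdeal p ∧ c ∉ p := by
  have hcabs : (0 : A) < |c| := lt_of_le_of_ne (abs_nonneg c)
    (fun h => hc (abs_eq_zero' h.symm))
  have hD : IsFilt {z : A | |c| ≤ z} := by
    refine ⟨⟨|c|, le_refl _⟩, ?_, ?_, ?_, ?_⟩
    · intro h0
      exact hc (abs_eq_zero' (le_antisymm h0 (abs_nonneg c)))
    · exact fun d hd => hcabs.le.trans hd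
    · exact fun a ha b hb => le_inf ha hb
    · exact fun a ha z hz => ha.trans hz
  obtain ⟨U, hU, hDU, hmax⟩ := exists_ultrafilt hD
  have hprime := polD_prime hU hmax
  have hcU : |c| ∈ U := hDU (le_refl |c|)
  have hcnot : c ∉ polD U := by
    rintro ⟨u, hu, h0⟩
    have : |c| ⊓ u ∈ U := hU.2.2.2.1 _ hcU u hu
    rw [h0] at this
    exact hU.2.1 this
  obtain ⟨p, hpmin, hpsub⟩ := exists_minimalPrime_subset hprime
  exact ⟨p, hpmin, fun hcp => hcnot (hpsub hcp)⟩

/-- the complement filter of a prime ideal -/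
lemma complement_filt {p : Set A} (hp : IsPrimeIdeal p) :
    IsFilt {d : A | 0 ≤ d ∧ d ∉ p} := by
  obtain ⟨a, ha⟩ : ∃ a : A, a ∉ p := by
    by_contra hcon
    push_neg at hcon
    exact hp.2.1 (Set.eq_univ_of_forall hcon)
  have habs : |a| ∉ p := fun hc => ha ((hp.1.abs_mem_iff a).1 hc)
  refine ⟨⟨|a|, abs_nonneg a, habs⟩, ?_, fun d hd => hd.1, ?_, ?_⟩
  · exact fun h0 => h0.2 hp.1.zero_mem
  · rintro y ⟨hy0, hyp⟩ z ⟨hz0, hzp⟩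
    refine ⟨le_inf hy0 hz0, fun hw => ?_⟩
    have hkey : (y - (y ⊓ z)) ⊓ (z - (y ⊓ z)) = 0 := by
      have : (y - (y ⊓ z)) ⊓ (z - (y ⊓ z)) = (y ⊓ z) - (y ⊓ z) := by
        rw [sub_eq_add_neg y, sub_eq_add_neg z, sub_eq_add_neg,
          ← inf_add y z (-(y ⊓ z))]
      rw [this, sub_self]
    rcases hp.2.2 _ _ hkey with h | h
    · exact hyp (by simpa using hp.1.add_mem h hw)
    · exact hzp (by simpa using hp.1.add_mem h hw)
  · rintro d ⟨hd0, hdp⟩ z hdz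
    exact ⟨hd0.trans hdz, fun hz => hdp (hp.1.convex hp.1.zero_mem hz hd0 hdz)⟩

/-- L2: in a minimal prime, every member is disjoint from some non-member -/
lemma minimalPrime_mem_iff {p : Set A} (hp : IsMinimalPrimeLIdeal p) {g : A} (hg : g ∈ p) :
    ∃ y : A, y ∉ p ∧ |g| ⊓ |y| = 0 := by
  by_contra hcon
  push_neg at hcon
  set D : Set A := {d : A | 0 ≤ d ∧ d ∉ p} with hDdef
  have hD : IsFilt D := complement_filt hp.1
  set D' : Set A := {z : A | ∃ d ∈ D, |g| ⊓ d ≤ z} with hD'def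
  have hD' : IsFilt D' := by
    obtain ⟨d0, hd0⟩ := hD.1
    refine ⟨⟨|g|, d0, hd0, inf_le_left⟩, ?_, ?_, ?_, ?_⟩
    · rintro ⟨d, hd, hle⟩
      have h0 : |g| ⊓ d = 0 :=
        le_antisymm hle (le_inf (abs_nonneg g) (hD.2.2.1 d hd))
      refine hcon d hd.2 ?_
      rwa [abs_of_nonneg hd.1]
    · rintro z ⟨d, hd, hle⟩
      exact le_trans (le_inf (abs_nonneg g) (hD.2.2.1 d hd)) hle
    · rintro z1 ⟨d1, hd1, h1⟩ z2 ⟨d2, hd2, h2⟩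
      refine ⟨d1 ⊓ d2, hD.2.2.2.1 d1 hd1 d2 hd2, le_inf ?_ ?_⟩
      · exact le_trans (inf_le_inf_left _ inf_le_left) h1
      · exact le_trans (inf_le_inf_left _ inf_le_right) h2
    · rintro z ⟨d, hd, hle⟩ w hzw
      exact ⟨d, hd, hle.trans hzw⟩
  obtain ⟨U, hU, hDU', hmax⟩ := exists_ultrafilt hD'
  have hprime := polD_prime hU hmax
  have hDU : ∀ d : A, 0 ≤ d → d ∉ p → d ∈ U := by
    intro d hd0 hdp
    exact hDU' ⟨d, ⟨hd0, hdp⟩, inf_le_right⟩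
  have hsub : polD U ⊆ p := polD_subset hU hp.1 hDU
  have hgU : |g| ∈ U := by
    obtain ⟨d0, hd0⟩ := hD.1
    exact hDU' ⟨d0, hd0, inf_le_left⟩
  have hgnot : g ∉ polD U := by
    rintro ⟨u, hu, h0⟩
    have : |g| ⊓ u ∈ U := hU.2.2.2.1 _ hgU u hu
    rw [h0] at this
    exact hU.2.1 this
  exact hgnot ((hp.2 (polD U) hprime hsub) ▸ hg)

lemma mem_polar_singleton {x t : A} : x ∈ polar {t} ↔ |x| ⊓ |t| = 0 := by
  constructor
  · intro h
    have := h t (Set.mem_singleton t)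
    rwa [absl_eq_abs, absl_eq_abs] at this
  · intro h s hs
    rw [Set.mem_singleton_iff] at hs
    subst hs
    rwa [absl_eq_abs, absl_eq_abs]

lemma zero_mem_polar (T : Set A) : (0 : A) ∈ polar T := by
  intro t ht
  rw [absl_eq_abs, abs_zero]
  exact le_antisymm inf_le_left (le_inf le_rfl (absl_eq_abs t ▸ abs_nonneg t))

lemma inf_abs_mem_left {p : Set A} (hI : IsIdeal p) {x y : A} (hx : x ∈ p) :
    |x| ⊓ |y| ∈ p :=
  hI.convex hI.zero_mem ((hI.abs_mem_iff x).2 hx)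
    (le_inf (abs_nonneg x) (abs_nonneg y)) inf_le_left

lemma inf_abs_mem_right {p : Set A} (hI : IsIdeal p) {x y : A} (hy : y ∈ p) :
    |x| ⊓ |y| ∈ p :=
  hI.convex hI.zero_mem ((hI.abs_mem_iff y).2 hy)
    (le_inf (abs_nonneg x) (abs_nonneg y)) inf_le_right

lemma part_one (g f : A) (h : ∀ p : Set A, IsMinimalPrimeLIdeal p → (g ∈ p ↔ f ∉ p)) :
    polar (polar {g}) = polar {f} := by
  ext x
  constructor
  · intro hx
    rw [mem_polar_singleton]
    by_contra hne
    obtain ⟨p, hpmin, hcp⟩ := exists_minimalPrime_not_mem (c := |x| ⊓ |f|) hne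
    have hxp : x ∉ p := fun hmem => hcp (inf_abs_mem_left hpmin.1.1 hmem)
    have hfp : f ∉ p := fun hmem => hcp (inf_abs_mem_right hpmin.1.1 hmem)
    have hgp : g ∈ p := (h p hpmin).2 hfp
    obtain ⟨y, hyp, hgy⟩ := minimalPrime_mem_iff hpmin hgp
    have hymem : y ∈ polar {g} := mem_polar_singleton.2 (by rwa [inf_comm] at hgy)
    have hxy : |x| ⊓ |y| = 0 := by
      have := hx y hymem
      rwa [absl_eq_abs, absl_eq_abs] at this
    rcases prime_abs hpmin.1 hxy with hc | hc
    · exact hxp hc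
    · exact hyp hc
  · intro hx y hy
    rw [absl_eq_abs, absl_eq_abs]
    by_contra hne
    obtain ⟨p, hpmin, hcp⟩ := exists_minimalPrime_not_mem (c := |x| ⊓ |y|) hne
    have hxp : x ∉ p := fun hmem => hcp (inf_abs_mem_left hpmin.1.1 hmem)
    have hyp : y ∉ p := fun hmem => hcp (inf_abs_mem_right hpmin.1.1 hmem)
    have hyg : |y| ⊓ |g| = 0 := mem_polar_singleton.1 hy
    have hgp : g ∈ p := by
      rcases prime_abs hpmin.1 hyg with hc | hc
      · exact absurd hc hyp
      · exact hc
    have hfp : f ∉ p := (h p hpmin).1 hgp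
    have hxf : |x| ⊓ |f| = 0 := mem_polar_singleton.1 hx
    rcases prime_abs hpmin.1 hxf with hc | hc
    · exact hxp hc
    · exact absurd hc hfp

lemma self_mem_double_polar (t : A) : t ∈ polar (polar {t}) := by
  intro u hu
  rw [absl_eq_abs, absl_eq_abs, inf_comm]
  have := mem_polar_singleton.1 hu
  exact this

lemma eq_zero_of_mem_polar_self {x : A} {T : Set A} (hx : x ∈ T) (hx' : x ∈ polar T) :
    x = 0 := by
  have := hx' x hx
  rw [absl_eq_abs, inf_idem] at this
  exact abs_eq_zero' this

end Aux

/-- If for every minimal prime ideal `p` one has `g ∈ p ↔ f ∉ p`, then `g^⊥⊥ = f^⊥`;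
consequently `f^⊥⊥` is the complement of `g^⊥⊥` in the lattice of principal polars:
their meet (intersection) is the bottom polar `{0}` and their join
`(g^⊥⊥ ∪ f^⊥⊥)^⊥⊥` is the top polar `A`. -/
theorem statement5 {A : Type*} [Lattice A] [AddCommGroup A]
    [CovariantClass A A (· + ·) (· ≤ ·)]
    (g f : A) (h : ∀ p : Set A, IsMinimalPrimeLIdeal p → (g ∈ p ↔ f ∉ p)) :
    polar (polar {g}) = polar {f} ∧
    polar (polar {g}) ∩ polar (polar {f}) = {0} ∧
    polar (polar (polar (polar {g}) ∪ polar (polar {f}))) = Set.univ := by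
  have eq1 : polar (polar {g}) = polar {f} := part_one g f h
  refine ⟨eq1, ?_, ?_⟩
  · ext x
    simp only [Set.mem_inter_iff, Set.mem_singleton_iff]
    constructor
    · rintro ⟨h1, h2⟩
      rw [eq1] at h1
      exact eq_zero_of_mem_polar_self h1 h2
    · rintro rfl
      exact ⟨zero_mem_polar _, zero_mem_polar _⟩
  · refine Set.eq_univ_of_forall fun x => ?_
    intro t ht
    have ht0 : t = 0 := by
      have htf : t ∈ polar {f} := by
        rw [mem_polar_singleton]
        have := ht f (Set.mem_union_right _ (self_mem_double_polar f))
        rwa [absl_eq_abs, absl_eq_abs] at this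
      refine eq_zero_of_mem_polar_self (Set.mem_union_left _ ?_) ht
      rw [eq1]
      exact htf
    subst ht0
    rw [absl_eq_abs 0, abs_zero]
    exact le_antisymm inf_le_right (le_inf (absl_eq_abs x ▸ abs_nonneg x) le_rfl)
end

section
/- Let G be an abelian ℓ-group with a strong unit u and let χ ∈ G be a component of u. Then every g ∈ G can be written in exactly one way as g = a + b with a ∈ χ^⊥ and b ∈ χ^⊥⊥; thus χ induces a product splitting G ≅ χ^⊥ × χ^⊥⊥. -/
/-- A component of `u`: an element `χ` with `χ ⊓ (u - χ) = 0` and `χ ⊔ (u - χ) = u`. -/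
def IsComponent {A : Type*} [Lattice A] [AddCommGroup A] (u χ : A) : Prop :=
  χ ⊓ (u - χ) = 0 ∧ χ ⊔ (u - χ) = u

section Aux

variable {G : Type*} [Lattice G] [AddCommGroup G] [CovariantClass G G (· + ·) (· ≤ ·)]

lemma absl_eq_abs_s11 (g : G) : absl g = |g| := posPart_add_negPart g

lemma absl_of_nonneg {g : G} (h : 0 ≤ g) : absl g = g := by
  rw [absl_eq_abs_s11, abs_of_nonneg h]

lemma absl_nonneg (g : G) : 0 ≤ absl g := by rw [absl_eq_abs_s11]; exact abs_nonneg g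

lemma eq_zero_of_absl_eq_zero {g : G} (h : absl g = 0) : g = 0 := by
  have h1 : g⁺ + g⁻ = 0 := h
  have hp : (0:G) ≤ g⁺ := posPart_nonneg g
  have hn : (0:G) ≤ g⁻ := negPart_nonneg g
  have hp0 : g⁺ = 0 := le_antisymm (by calc g⁺ = g⁺ + 0 := by rw [add_zero]
                                         _ ≤ g⁺ + g⁻ := by exact add_le_add le_rfl hn
                                         _ = 0 := h1) hp
  have hn0 : g⁻ = 0 := by rwa [hp0, zero_add] at h1
  have := posPart_sub_negPart g
  rw [hp0, hn0] at this; simpa using this.symm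

/-- disjointness is additive on nonneg elements -/
lemma inf_add_disj {a b c : G} (ha : 0 ≤ a) (hb : 0 ≤ b) (hc : 0 ≤ c)
    (h1 : a ⊓ c = 0) (h2 : b ⊓ c = 0) : (a + b) ⊓ c = 0 := by
  refine le_antisymm ?_ (le_inf (add_nonneg ha hb) hc)
  have key : (a + b) ⊓ c ≤ (a ⊓ c) + (b ⊓ c) := by
    have k1 : (a + b) ⊓ c ≤ (a ⊓ c) + b := by
      rw [inf_add]
      exact le_inf inf_le_left (inf_le_right.trans (le_add_of_nonneg_right hb))
    have k2 : (a + b) ⊓ c ≤ (a ⊓ c) + c := by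
      rw [inf_add]
      exact le_inf (inf_le_right.trans (le_add_of_nonneg_left ha))
        (inf_le_right.trans (le_add_of_nonneg_right hc))
    rw [add_inf]
    exact le_inf k1 k2
  calc (a + b) ⊓ c ≤ (a ⊓ c) + (b ⊓ c) := key
    _ = 0 := by rw [h1, h2, add_zero]

lemma inf_nsmul_disj {a c : G} (ha : 0 ≤ a) (hc : 0 ≤ c)
    (h : a ⊓ c = 0) : ∀ n : ℕ, (n • a) ⊓ c = 0 := by
  intro n
  induction n with
  | zero => simpa using inf_eq_left.2 hc
  | succ k ih =>
      rw [succ_nsmul]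
      exact inf_add_disj (nsmul_nonneg ha k) ha hc ih h

/-- polars are closed under subtraction -/
lemma polar_sub {T : Set G} {x y : G} (hx : x ∈ polar T) (hy : y ∈ polar T) :
    x - y ∈ polar T := by
  intro t ht
  refine le_antisymm ?_ (le_inf (absl_nonneg _) (absl_nonneg _))
  have h1 : absl (x - y) ≤ absl x + absl y := by
    rw [absl_eq_abs_s11, absl_eq_abs_s11, absl_eq_abs_s11]
    calc |x - y| = |x + (-y)| := by rw [sub_eq_add_neg]
      _ ≤ |x| + |(-y)| := abs_add_le _ _
      _ = |x| + |y| := by rw [abs_neg]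
  have h2 : (absl x + absl y) ⊓ absl t = 0 :=
    inf_add_disj (absl_nonneg x) (absl_nonneg y) (absl_nonneg t) (hx t ht) (hy t ht)
  calc absl (x - y) ⊓ absl t ≤ (absl x + absl y) ⊓ absl t :=
        inf_le_inf_right _ h1
    _ = 0 := h2

lemma polar_zero (T : Set G) : (0 : G) ∈ polar T := by
  intro t ht
  have : absl (0 : G) = 0 := by simp [absl]
  rw [this]
  exact inf_eq_left.2 (absl_nonneg t)

/-- decomposition of a nonnegative element -/
lemma decomp_nonneg (u : G) (hu : ∀ g : G, ∃ n : ℕ, 1 ≤ n ∧ g ≤ n • u)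
    (χ : G) (hχ : IsComponent u χ) {g : G} (hg : 0 ≤ g) :
    ∃ a b : G, a ∈ polar {χ} ∧ b ∈ polar (polar {χ}) ∧ g = a + b := by
  obtain ⟨hdisj, -⟩ := hχ
  have hχ0 : 0 ≤ χ := hdisj ▸ inf_le_left
  have huχ0 : 0 ≤ u - χ := hdisj ▸ inf_le_right
  obtain ⟨n, hn1, hgn⟩ := hu g
  set a := g ⊓ n • (u - χ) with ha_def
  set b := g ⊓ n • χ with hb_def
  have ha0 : 0 ≤ a := le_inf hg (nsmul_nonneg huχ0 n)
  have hb0 : 0 ≤ b := le_inf hg (nsmul_nonneg hχ0 n)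
  -- n•χ ⊓ n•(u-χ) = 0
  have hnn : (n • χ) ⊓ (n • (u - χ)) = 0 := by
    have h1 : (n • (u - χ)) ⊓ χ = 0 := inf_nsmul_disj huχ0 hχ0 (by rw [inf_comm]; exact hdisj) n
    have h2 : (n • χ) ⊓ (n • (u - χ)) = 0 :=
      inf_nsmul_disj hχ0 (nsmul_nonneg huχ0 n) (by rw [inf_comm]; exact h1) n
    exact h2
  have hab : a ⊓ b = 0 := by
    refine le_antisymm ?_ (le_inf ha0 hb0)
    calc a ⊓ b ≤ (n • (u - χ)) ⊓ (n • χ) := inf_le_inf inf_le_right inf_le_right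
      _ = 0 := by rw [inf_comm]; exact hnn
  have hsum : a + b = g := by
    letI : DistribLattice G := AddCommGroup.toDistribLattice G
    have hsupab : a ⊔ b = g := by
      have : a ⊔ b = g ⊓ ((n • (u - χ)) ⊔ (n • χ)) := (inf_sup_left g _ _).symm
      rw [this]
      have hsupn : (n • (u - χ)) ⊔ (n • χ) = n • u := by
        have := inf_add_sup (n • (u - χ)) (n • χ)
        rw [inf_comm, hnn, zero_add] at this
        rw [this, ← smul_add, sub_add_cancel]
      rw [hsupn]
      exact inf_eq_left.2 hgn
    have := inf_add_sup a b
    rw [hab, zero_add, hsupab] at this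
    exact this.symm
  refine ⟨a, b, ?_, ?_, hsum.symm⟩
  · intro t ht
    rw [Set.mem_singleton_iff] at ht
    rw [ht, absl_of_nonneg ha0, absl_of_nonneg hχ0]
    refine le_antisymm ?_ (le_inf ha0 hχ0)
    have hχle : χ ≤ n • χ := by
      calc χ = 1 • χ := (one_nsmul χ).symm
        _ ≤ n • χ := nsmul_le_nsmul_left hχ0 hn1
    calc a ⊓ χ ≤ (n • (u - χ)) ⊓ (n • χ) := inf_le_inf inf_le_right hχle
      _ = 0 := by rw [inf_comm]; exact hnn
  · intro t ht
    have htχ : absl t ⊓ χ = 0 := by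
      have := ht χ rfl
      rwa [absl_of_nonneg hχ0] at this
    rw [absl_of_nonneg hb0]
    refine le_antisymm ?_ (le_inf hb0 (absl_nonneg t))
    have : (n • χ) ⊓ absl t = 0 :=
      inf_nsmul_disj hχ0 (absl_nonneg t) (by rw [inf_comm]; exact htχ) n
    calc b ⊓ absl t ≤ (n • χ) ⊓ absl t := inf_le_inf_right _ inf_le_right
      _ = 0 := this

end Aux

/-- A component `χ` of a strong unit `u` induces a product splitting
`G ≅ χ^⊥ × χ^⊥⊥`: every `g` is uniquely a sum `a + b` with `a ∈ χ^⊥`, `b ∈ χ^⊥⊥`. -/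
theorem statement11 {G : Type*} [Lattice G] [AddCommGroup G]
    [CovariantClass G G (· + ·) (· ≤ ·)]
    (u : G) (hu0 : 0 ≤ u) (hu : ∀ g : G, ∃ n : ℕ, 1 ≤ n ∧ g ≤ n • u)
    (χ : G) (hχ : IsComponent u χ) (g : G) :
    ∃! ab : G × G,
      ab.1 ∈ polar {χ} ∧ ab.2 ∈ polar (polar {χ}) ∧ g = ab.1 + ab.2 := by
  obtain ⟨a₁, b₁, ha₁, hb₁, h₁⟩ :=
    decomp_nonneg u hu χ hχ (posPart_nonneg g)
  obtain ⟨a₂, b₂, ha₂, hb₂, h₂⟩ :=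
    decomp_nonneg u hu χ hχ (negPart_nonneg g)
  refine ⟨(a₁ - a₂, b₁ - b₂), ⟨polar_sub ha₁ ha₂, polar_sub hb₁ hb₂, ?_⟩, ?_⟩
  · have := posPart_sub_negPart g
    simp only
    rw [← this, h₁, h₂]; abel
  · rintro ⟨a, b⟩ ⟨ha, hb, hab⟩
    have h0 : a + b = (a₁ - a₂) + (b₁ - b₂) := by
      rw [← hab]
      have := posPart_sub_negPart g
      rw [← this, h₁, h₂]; abel
    have hkey : a - (a₁ - a₂) = (b₁ - b₂) - b :=
      sub_eq_sub_iff_add_eq_add.mpr (h0.trans (add_comm _ _))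
    have hd1 : a - (a₁ - a₂) ∈ polar {χ} := polar_sub ha (polar_sub ha₁ ha₂)
    have hd2 : a - (a₁ - a₂) ∈ polar (polar {χ}) := by
      rw [hkey]
      exact polar_sub (polar_sub hb₁ hb₂) hb
    have hd0 : a - (a₁ - a₂) = 0 := by
      have := hd2 _ hd1
      rw [inf_idem] at this
      exact eq_zero_of_absl_eq_zero this
    have ha' : a = a₁ - a₂ := sub_eq_zero.mp hd0
    have hb' : b = b₁ - b₂ := by
      rw [ha'] at h0
      exact add_left_cancel h0
    rw [Prod.ext_iff]
    exact ⟨ha', hb'⟩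
end

section
/- Let H be an abelian ℓ-group with a strong unit v such that for every x ∈ H every element g ∈ H can be written g = a + b with a ∈ x^⊥⊥ and b ∈ x^⊥ (as holds in every projectable Archimedean ℓ-group). Then for every h ∈ H there exists a unique component σ of v satisfying σ^⊥⊥ = h^⊥⊥. -/
section Aux

set_option linter.unusedSectionVars false

variable {A : Type*} [Lattice A] [AddCommGroup A]
  [CovariantClass A A (· + ·) (· ≤ ·)]

lemma absl_nonneg' (a : A) : 0 ≤ absl a := by
  have h1 : (0 : A) ≤ a ⊔ 0 := le_sup_right
  have h2 : (0 : A) ≤ -a ⊔ 0 := le_sup_right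
  simpa [absl] using add_le_add h1 h2

lemma absl_of_nonneg_s12 {a : A} (ha : 0 ≤ a) : absl a = a := by
  have hneg : -a ≤ 0 := by simpa using add_le_add_right ha (-a)
  have h1 : a ⊔ 0 = a := sup_eq_left.mpr ha
  have h2 : -a ⊔ 0 = 0 := sup_eq_right.mpr hneg
  simp [absl, h1, h2]

lemma pos_le_absl (a : A) : a ⊔ 0 ≤ absl a := by
  have : (0 : A) ≤ -a ⊔ 0 := le_sup_right
  simp only [absl]
  calc a ⊔ 0 = (a ⊔ 0) + 0 := (add_zero _).symm
    _ ≤ (a ⊔ 0) + (-a ⊔ 0) := add_le_add_right this _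

lemma neg_le_absl (a : A) : -a ⊔ 0 ≤ absl a := by
  have h : (0 : A) ≤ a ⊔ 0 := le_sup_right
  calc -a ⊔ 0 = 0 + (-a ⊔ 0) := (zero_add _).symm
    _ ≤ (a ⊔ 0) + (-a ⊔ 0) := add_le_add_left h _
    _ = absl a := rfl

/-- Disjointness with a sum. -/
lemma disj_add {x c d : A} (hx : 0 ≤ x) (hc : 0 ≤ c) (hd : 0 ≤ d)
    (h1 : x ⊓ c = 0) (h2 : x ⊓ d = 0) : x ⊓ (c + d) = 0 := by
  have hled : x ⊓ (c + d) ≤ d :=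
    calc x ⊓ (c + d) ≤ (x + d) ⊓ (c + d) :=
          inf_le_inf_right _ (le_add_of_nonneg_right hd)
      _ = x ⊓ c + d := (inf_add _ _ _).symm
      _ = d := by rw [h1, zero_add]
  have hle : x ⊓ (c + d) ≤ 0 := le_trans (le_inf inf_le_left hled) h2.le
  have hge : 0 ≤ x ⊓ (c + d) := le_inf hx (add_nonneg hc hd)
  exact le_antisymm hle hge

lemma disj_nsmul {x c : A} (hx : 0 ≤ x) (hc : 0 ≤ c)
    (h1 : x ⊓ c = 0) (n : ℕ) : x ⊓ (n • c) = 0 := by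
  induction n with
  | zero => simpa using inf_eq_right.mpr hx
  | succ k ih =>
      rw [succ_nsmul]
      exact disj_add hx (nsmul_nonneg hc k) hc ih h1

lemma IsComponent.nonneg {u χ : A} (hχ : IsComponent u χ) : 0 ≤ χ :=
  hχ.1 ▸ inf_le_left

lemma IsComponent.le {u χ : A} (hχ : IsComponent u χ) : χ ≤ u :=
  sub_nonneg.mp (hχ.1 ▸ inf_le_right)

lemma mem_biorth (a : A) : a ∈ polar (polar {a}) := by
  intro t ht
  rw [inf_comm]
  exact ht a rfl

/-- A component of `u` lying in the bipolar of another component is below it. -/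
lemma comp_le_comp {u σ τ : A} (hσ : IsComponent u σ) (hτ : IsComponent u τ)
    (hmem : σ ∈ polar (polar {τ})) : σ ≤ τ := by
  have hτc : u - τ ∈ polar {τ} := by
    intro t ht
    rw [Set.mem_singleton_iff] at ht
    rw [ht, absl_of_nonneg_s12 (sub_nonneg.mpr hτ.le), absl_of_nonneg_s12 hτ.nonneg, inf_comm]
    exact hτ.1
  have hd : σ ⊓ (u - τ) = 0 := by
    have := hmem _ hτc
    rwa [absl_of_nonneg_s12 hσ.nonneg, absl_of_nonneg_s12 (sub_nonneg.mpr hτ.le)] at this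
  have h1 : (σ - τ) ⊔ 0 ≤ σ := sup_le (by simpa using hτ.nonneg) hσ.nonneg
  have h2 : (σ - τ) ⊔ 0 ≤ u - τ :=
    sup_le (by simpa using hσ.le) (sub_nonneg.mpr hτ.le)
  have h3 : (σ - τ) ⊔ 0 ≤ 0 := le_trans (le_inf h1 h2) hd.le
  have h4 : σ - τ ≤ 0 := le_trans le_sup_left h3
  have := add_le_add_right h4 τ
  simpa using this

end Aux

/-- In an abelian ℓ-group with strong unit `v` in which every element decomposes
along every principal polar (as in any projectable Archimedean ℓ-group), each
element `h` determines a unique component `σ` of `v` with `σ^⊥⊥ = h^⊥⊥`. -/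
theorem statement12 {H : Type*} [Lattice H] [AddCommGroup H]
    [CovariantClass H H (· + ·) (· ≤ ·)]
    (v : H) (hv0 : 0 ≤ v) (hv : ∀ g : H, ∃ n : ℕ, 1 ≤ n ∧ g ≤ n • v)
    (hdec : ∀ x g : H, ∃ a ∈ polar (polar {x}), ∃ b ∈ polar {x}, g = a + b)
    (h : H) :
    ∃! σ : H, IsComponent v σ ∧ polar (polar {σ}) = polar (polar {h}) := by
  obtain ⟨a, ha, b, hb, hab⟩ := hdec h v
  -- a and b are disjoint
  have hdab : absl a ⊓ absl b = 0 := ha b hb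
  -- positivity of a and b
  have ha0 : 0 ≤ a := by
    have hnab : -a ≤ b := by
      have := add_le_add_left (hab ▸ hv0) (-a)
      simpa [← add_assoc] using this
    have h1 : -a ⊔ 0 ≤ absl b := le_trans (sup_le_sup_right hnab 0) (pos_le_absl b)
    have h2 : -a ⊔ 0 ≤ absl a := neg_le_absl a
    have h3 : -a ≤ 0 := le_trans le_sup_left (le_trans (le_inf h2 h1) hdab.le)
    have := add_le_add_right h3 a
    simpa using this
  have hb0 : 0 ≤ b := by
    have hnab : -b ≤ a := by
      have := add_le_add_right (hab ▸ hv0) (-b)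
      simpa [add_assoc] using this
    have h1 : -b ⊔ 0 ≤ absl a := le_trans (sup_le_sup_right hnab 0) (pos_le_absl a)
    have h2 : -b ⊔ 0 ≤ absl b := neg_le_absl b
    have h3 : -b ≤ 0 := le_trans le_sup_left (le_trans (le_inf h1 h2) hdab.le)
    have := add_le_add_right h3 b
    simpa using this
  have hinfab : a ⊓ b = 0 := by
    rwa [absl_of_nonneg_s12 ha0, absl_of_nonneg_s12 hb0] at hdab
  have hvsub : v - a = b := by rw [hab]; abel
  -- a is a component of v
  have hcomp : IsComponent v a := by
    constructor
    · rw [hvsub]; exact hinfab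
    · rw [hvsub, hab, ← inf_add_sup a b, hinfab, zero_add]
  -- polar {a} = polar {h}
  have hpolar : polar {a} = polar {h} := by
    apply Set.Subset.antisymm
    · -- a^⊥ ⊆ h^⊥, using the strong unit
      intro y hy t ht
      rw [Set.mem_singleton_iff] at ht
      rw [ht]
      show absl y ⊓ absl h = 0
      have hya : absl y ⊓ a = 0 := by
        have := hy a rfl
        rwa [absl_of_nonneg_s12 ha0] at this
      obtain ⟨n, -, hn⟩ := hv (absl h)
      set x : H := absl y ⊓ absl h with hxdef
      have hx0 : 0 ≤ x := le_inf (absl_nonneg' y) (absl_nonneg' h)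
      have hxa : x ⊓ (n • a) = 0 := by
        have hxa0 : x ⊓ a = 0 := by
          have h1 : x ⊓ a ≤ 0 :=
            le_trans (inf_le_inf_right a inf_le_left) hya.le
          exact le_antisymm h1 (le_inf hx0 ha0)
        exact disj_nsmul hx0 ha0 hxa0 n
      have hxb : x ⊓ (n • b) = 0 := by
        have hhb : absl h ⊓ b = 0 := by
          have := hb h rfl
          rwa [absl_of_nonneg_s12 hb0, inf_comm] at this
        have hxb0 : x ⊓ b = 0 := by
          have h1 : x ⊓ b ≤ 0 :=
            le_trans (inf_le_inf_right b inf_le_right) hhb.le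
          exact le_antisymm h1 (le_inf hx0 hb0)
        exact disj_nsmul hx0 hb0 hxb0 n
      have hsum : x ⊓ (n • a + n • b) = 0 :=
        disj_add hx0 (nsmul_nonneg ha0 n) (nsmul_nonneg hb0 n) hxa hxb
      have hxle : x ≤ n • a + n • b := by
        have hnv : n • a + n • b = n • v := by rw [hab, smul_add]
        rw [hnv]
        exact le_trans inf_le_right hn
      have hx : x = 0 := by
        have := inf_eq_left.mpr hxle
        rw [hsum] at this
        exact this.symm
      exact hx
    · -- h^⊥ ⊆ a^⊥
      intro y hy t ht
      rw [Set.mem_singleton_iff] at ht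
      rw [ht, inf_comm]
      exact ha y hy
  have hpp : polar (polar {a}) = polar (polar {h}) := by rw [hpolar]
  refine ⟨a, ⟨hcomp, hpp⟩, ?_⟩
  rintro τ ⟨hτcomp, hτpp⟩
  have heq : polar (polar {τ}) = polar (polar {a}) := by rw [hτpp, hpp]
  have h1 : τ ≤ a := comp_le_comp hτcomp hcomp (heq ▸ mem_biorth τ)
  have h2 : a ≤ τ := comp_le_comp hcomp hτcomp (heq.symm ▸ mem_biorth a)
  exact le_antisymm h1 h2
end
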